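/- Let the functions h_j be defined recursively by h_1(φ) = φ and h_{j+1}(φ) = h_j'(φ)·sin(φ) − (2j−1)·h_j(φ)·cos(φ) for j ≥ 1. Then for every j ≥ 1, h_j is non-negative and monotone increasing on [0,π], and moreover h_{j+1}'(φ) = j²·h_j(φ)·sin(φ) for all φ ∈ [0,π]. -/

import Mathlib

open Real

/-- The sequence of functions `h_j` defined by `h_1(φ) = φ` and
`h_{j+1}(φ) = h_j'(φ)·sin φ − (2j−1)·h_j(φ)·cos φ` for `j ≥ 1` (with `h_0 := 0` as a dummy). -/
noncomputable def hseq : ℕ → ℝ → ℝ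
  | 0 => fun _ => 0
  | 1 => fun φ => φ
  | (j + 2) => fun φ =>
      deriv (hseq (j + 1)) φ * Real.sin φ - (2 * (j : ℝ) + 1) * hseq (j + 1) φ * Real.cos φ

lemma hseq_succ (j : ℕ) (hj : 1 ≤ j) (φ : ℝ) :
    hseq (j + 1) φ = deriv (hseq j) φ * Real.sin φ
      - (2 * (j : ℝ) - 1) * hseq j φ * Real.cos φ := by
  cases j with
  | zero => omega
  | succ k => simp only [hseq]; push_cast; ring

lemma hseq_key (j : ℕ) (hj : 1 ≤ j) :
    ContDiff ℝ (⊤:ℕ∞) (hseq j) ∧ hseq j 0 = 0 ∧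
      (∀ φ, deriv (hseq (j + 1)) φ = (j : ℝ) ^ 2 * hseq j φ * Real.sin φ) := by
  induction j, hj using Nat.le_induction with
  | base =>
    have h1 : hseq 1 = fun φ : ℝ => φ := rfl
    have hd1 : ∀ x : ℝ, deriv (hseq 1) x = 1 := by
      intro x; rw [h1]; exact deriv_id x
    have hfun2 : hseq 2 = fun φ => Real.sin φ - φ * Real.cos φ := by
      funext x
      show deriv (hseq 1) x * Real.sin x - (2 * ((0:ℕ) : ℝ) + 1) * hseq 1 x * Real.cos x = _
      rw [hd1, h1]; push_cast; ring
    refine ⟨by rw [h1]; exact contDiff_id, rfl, fun φ => ?_⟩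
    have H : HasDerivAt (fun φ => Real.sin φ - φ * Real.cos φ)
        (Real.cos φ - (1 * Real.cos φ + φ * (-Real.sin φ))) φ :=
      (Real.hasDerivAt_sin φ).sub ((hasDerivAt_id φ).mul (Real.hasDerivAt_cos φ))
    rw [hfun2, H.deriv, h1]
    push_cast; ring
  | succ n hn ih =>
    obtain ⟨Hcd, H0, Hderiv⟩ := ih
    have hd1 : Differentiable ℝ (hseq n) := Hcd.differentiable (by simp)
    -- smoothness of hseq (n+1)
    have heq : hseq (n + 1) = fun φ => deriv (hseq n) φ * Real.sin φ
        - (2 * (n : ℝ) - 1) * hseq n φ * Real.cos φ := funext (hseq_succ n hn)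
    have Hcd' : ContDiff ℝ (⊤:ℕ∞) (hseq (n + 1)) := by
      rw [heq]
      exact (((contDiff_infty_iff_deriv.mp Hcd).2).mul (Real.contDiff_sin.of_le le_top)).sub
        ((contDiff_const.mul Hcd).mul (Real.contDiff_cos.of_le le_top))
    have hd2 : Differentiable ℝ (hseq (n + 1)) := Hcd'.differentiable (by simp)
    have H0' : hseq (n + 1) 0 = 0 := by
      rw [hseq_succ n hn, H0, Real.sin_zero]; ring
    refine ⟨Hcd', H0', fun φ => ?_⟩
    have hderivAt : HasDerivAt (hseq (n + 1)) ((n : ℝ) ^ 2 * hseq n φ * Real.sin φ) φ := by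
      have := (hd2 φ).hasDerivAt
      rwa [Hderiv φ] at this
    have hfun : hseq (n + 2) = fun φ => (n : ℝ) ^ 2 * hseq n φ * Real.sin φ * Real.sin φ
        - (2 * (n : ℝ) + 1) * hseq (n + 1) φ * Real.cos φ := by
      funext x
      show deriv (hseq (n + 1)) x * Real.sin x - _ = _
      rw [Hderiv x]
    have H1 := ((((hd1 φ).hasDerivAt.const_mul ((n : ℝ) ^ 2)).mul
        (Real.hasDerivAt_sin φ)).mul (Real.hasDerivAt_sin φ)).sub
      ((hderivAt.const_mul (2 * (n : ℝ) + 1)).mul (Real.hasDerivAt_cos φ))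
    rw [hfun]
    refine H1.deriv.trans ?_
    rw [hseq_succ n hn]
    simp only [Pi.mul_apply]; push_cast; ring

lemma hseq_pos (j : ℕ) (hj : 1 ≤ j) :
    (∀ φ ∈ Set.Icc (0 : ℝ) π, 0 ≤ hseq j φ) ∧
      MonotoneOn (hseq j) (Set.Icc (0 : ℝ) π) := by
  induction j, hj using Nat.le_induction with
  | base =>
    constructor
    · intro φ hφ; exact hφ.1
    · intro a _ b _ hab; exact hab
  | succ n hn ih =>
    obtain ⟨Hcd, H0, Hderiv⟩ := hseq_key n hn
    obtain ⟨Hcd', H0', _⟩ := hseq_key (n + 1) (by omega)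
    have mono : MonotoneOn (hseq (n + 1)) (Set.Icc (0 : ℝ) π) := by
      apply monotoneOn_of_deriv_nonneg (convex_Icc 0 π)
        (Hcd'.continuous.continuousOn)
        ((Hcd'.differentiable (by simp)).differentiableOn)
      intro x hx
      rw [interior_Icc] at hx
      rw [Hderiv x]
      exact mul_nonneg (mul_nonneg (sq_nonneg _) (ih.1 x ⟨hx.1.le, hx.2.le⟩))
        (Real.sin_nonneg_of_nonneg_of_le_pi hx.1.le hx.2.le)
    refine ⟨fun φ hφ => ?_, mono⟩
    have := mono ⟨le_refl 0, Real.pi_pos.le⟩ hφ hφ.1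
    rwa [H0'] at this

theorem hseq_props (j : ℕ) (hj : 1 ≤ j) :
    (∀ φ ∈ Set.Icc (0 : ℝ) π, 0 ≤ hseq j φ) ∧
    MonotoneOn (hseq j) (Set.Icc (0 : ℝ) π) ∧
    (∀ φ ∈ Set.Icc (0 : ℝ) π,
      deriv (hseq (j + 1)) φ = (j : ℝ) ^ 2 * hseq j φ * Real.sin φ) := by
  exact ⟨(hseq_pos j hj).1, (hseq_pos j hj).2, fun φ _ => (hseq_key j hj).2.2 φ⟩
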